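/- Let (Ω, μ) be a measure space and S : ℝ → ℝ be monotonically decreasing (antitone) and Lipschitz continuous with Lipschitz constant L_S > 0. Let u, v : Ω → ℝ be measurable functions such that u − v belongs to L²(μ). Then S∘u − S∘v belongs to L²(μ) and (1/L_S) · ‖S∘u − S∘v‖²_{L²(μ)} ≤ ∫_Ω (S(u(x)) − S(v(x))) · (v(x) − u(x)) dμ(x). -/

import Mathlib

open MeasureTheory

/-- Integrated monotonicity estimate for the saturation error term `I₁`:
if `S` is antitone and Lipschitz with constant `L_S > 0`, and `u, v` are measurable
with `u − v ∈ L²(μ)`, then `S∘u − S∘v ∈ L²(μ)` and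
`(1/L_S) · ‖S∘u − S∘v‖²_{L²} ≤ ∫ (S(u x) − S(v x)) · (v x − u x) dμ`. -/
theorem saturation_integrated_monotonicity_estimate
    {Ω : Type*} [MeasurableSpace Ω] (μ : Measure Ω)
    (S : ℝ → ℝ) (L_S : ℝ) (hL : 0 < L_S)
    (hanti : Antitone S)
    (hlip : ∀ a b : ℝ, |S a - S b| ≤ L_S * |a - b|)
    (u v : Ω → ℝ) (hu : Measurable u) (hv : Measurable v)
    (huv : MemLp (fun x => u x - v x) 2 μ) :
    MemLp (fun x => S (u x) - S (v x)) 2 μ ∧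
      (1 / L_S) * ∫ x, (S (u x) - S (v x)) ^ 2 ∂μ ≤
        ∫ x, (S (u x) - S (v x)) * (v x - u x) ∂μ := by
  -- S is continuous (Lipschitz)
  have hSlip : LipschitzWith (Real.toNNReal L_S) S := by
    apply LipschitzWith.of_dist_le_mul
    intro a b
    simpa [Real.dist_eq, Real.coe_toNNReal _ hL.le] using hlip a b
  have hScont : Continuous S := hSlip.continuous
  -- pointwise key inequality
  have key : ∀ x, (S (u x) - S (v x)) ^ 2 ≤
      L_S * ((S (u x) - S (v x)) * (v x - u x)) := by
    intro x
    set a := u x; set b := v x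
    rcases le_total a b with h | h
    · have h1 : S b ≤ S a := hanti h
      have h2 : S a - S b ≤ L_S * (b - a) := by
        have := hlip a b
        rw [abs_of_nonneg (by linarith), abs_of_nonpos (by linarith : a - b ≤ 0)] at this
        linarith
      nlinarith
    · have h1 : S a ≤ S b := hanti h
      have h2 : S b - S a ≤ L_S * (a - b) := by
        have := hlip a b
        rw [abs_of_nonpos (by linarith : S a - S b ≤ 0),
          abs_of_nonneg (by linarith : (0:ℝ) ≤ a - b)] at this
        linarith
      nlinarith
  have hmeas : AEStronglyMeasurable (fun x => S (u x) - S (v x)) μ :=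
    (((hScont.measurable.comp hu).sub (hScont.measurable.comp hv)).aestronglyMeasurable)
  have hmem : MemLp (fun x => S (u x) - S (v x)) 2 μ := by
    refine (huv.const_mul L_S).mono hmeas ?_
    filter_upwards with x
    simp only [norm_mul, Real.norm_eq_abs]
    calc |S (u x) - S (v x)| ≤ L_S * |u x - v x| := hlip _ _
      _ ≤ |L_S| * |u x - v x| := by
          gcongr; exact le_abs_self _
  refine ⟨hmem, ?_⟩
  have hsq : Integrable (fun x => (S (u x) - S (v x)) ^ 2) μ := by
    have := hmem.integrable_sq
    simpa [sq] using this
  have huvsq : Integrable (fun x => (u x - v x) ^ 2) μ := by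
    have := huv.integrable_sq
    simpa [sq] using this
  have hprod : Integrable (fun x => (S (u x) - S (v x)) * (v x - u x)) μ := by
    refine Integrable.mono' (huvsq.const_mul L_S)
      (hmeas.mul ((hv.sub hu).aestronglyMeasurable)) ?_
    filter_upwards with x
    rw [Real.norm_eq_abs, abs_mul]
    calc |S (u x) - S (v x)| * |v x - u x|
        ≤ (L_S * |u x - v x|) * |v x - u x| := by gcongr; exact hlip _ _
      _ = L_S * (u x - v x) ^ 2 := by
          rw [abs_sub_comm (v x)]
          rw [mul_assoc, ← abs_mul, ← sq, abs_sq]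
  rw [div_mul_eq_mul_div, one_mul, div_le_iff₀ hL] at *
  · calc (∫ x, (S (u x) - S (v x)) ^ 2 ∂μ)
        ≤ ∫ x, L_S * ((S (u x) - S (v x)) * (v x - u x)) ∂μ :=
          integral_mono hsq (hprod.const_mul L_S) key
      _ = (∫ x, (S (u x) - S (v x)) * (v x - u x) ∂μ) * L_S := by
          rw [integral_const_mul]; ring
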